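/- For every p ∈ (0,1)^n, every pseudo-Boolean function f, and every S ⊆ N, Φ_{B,p}(f,S) = Σ_{T⊆N∖S} p_T^S (f(T∪S) − f(T)), where p_T^S = Π_{i∈T} p_i · Π_{i∈N∖(S∪T)}(1−p_i); moreover p_T^S ≥ 0 and Σ_{T⊆N∖S} p_T^S = 1. -/

import Mathlib

open Finset

/-- The Möbius transform `a(T) = Σ_{R⊆T}(−1)^{|T|−|R|} f(R)`. -/
noncomputable def moebius {n : ℕ} (f : Finset (Fin n) → ℝ) (T : Finset (Fin n)) : ℝ :=
  ∑ R ∈ T.powerset, (-1 : ℝ) ^ (T.card - R.card) * f R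

/-- The weighted Banzhaf influence index (Möbius form):
`Φ_{B,p}(f,S) = Σ_{T⊆N, T∩S≠∅} a(T) Π_{i∈T∖S} p_i`. -/
noncomputable def wBanzhafInfluence {n : ℕ} (p : Fin n → ℝ) (f : Finset (Fin n) → ℝ)
    (S : Finset (Fin n)) : ℝ :=
  ∑ T ∈ (univ : Finset (Finset (Fin n))).filter (fun T => (T ∩ S).Nonempty),
    moebius f T * ∏ i ∈ T \ S, p i

/-- The coefficients `p_T^S = Π_{i∈T} p_i · Π_{i∈N∖(S∪T)}(1−p_i)`. -/
noncomputable def pTS {n : ℕ} (p : Fin n → ℝ) (S T : Finset (Fin n)) : ℝ :=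
  (∏ i ∈ T, p i) * ∏ i ∈ univ \ (S ∪ T), (1 - p i)

lemma sum_bern {n : ℕ} (p : Fin n → ℝ) (B : Finset (Fin n)) :
    ∑ T ∈ B.powerset, (∏ i ∈ T, p i) * ∏ i ∈ B \ T, (1 - p i) = 1 := by
  rw [← Finset.prod_add]
  simp

lemma moebius_inv {n : ℕ} (f : Finset (Fin n) → ℝ) (W : Finset (Fin n)) :
    ∑ T ∈ W.powerset, moebius f T = f W := by
  unfold moebius
  rw [Finset.sum_comm' (t' := W.powerset)
      (s' := fun R => W.powerset.filter (fun T => R ⊆ T))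
      (f := fun T R => (-1 : ℝ) ^ (T.card - R.card) * f R)
      (fun T R => by
        simp only [Finset.mem_powerset, Finset.mem_filter]
        constructor
        · rintro ⟨hT, hR⟩; exact ⟨⟨hT, hR⟩, hR.trans hT⟩
        · rintro ⟨⟨hT, hR⟩, _⟩; exact ⟨hT, hR⟩)]
  have inner : ∀ R ∈ W.powerset,
      ∑ T ∈ W.powerset.filter (fun T => R ⊆ T), (-1 : ℝ) ^ (T.card - R.card) * f R
        = (if R = W then 1 else 0) * f R := by
    intro R hR
    rw [Finset.mem_powerset] at hR
    rw [← Finset.sum_mul]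
    congr 1
    have reidx : ∑ T ∈ W.powerset.filter (fun T => R ⊆ T), (-1 : ℝ) ^ (T.card - R.card)
        = ∑ T' ∈ (W \ R).powerset, (-1 : ℝ) ^ T'.card := by
      refine Finset.sum_nbij' (i := fun T => T \ R) (j := fun T' => R ∪ T')
        (fun T hT => by
          simp only [Finset.mem_filter, Finset.mem_powerset] at hT ⊢
          exact Finset.sdiff_subset_sdiff hT.1 le_rfl)
        (fun T' hT' => by
          simp only [Finset.mem_filter, Finset.mem_powerset] at hT' ⊢
          exact ⟨Finset.union_subset hR (hT'.trans (Finset.sdiff_subset)),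
            Finset.subset_union_left⟩)
        (fun T hT => by
          simp only [Finset.mem_filter, Finset.mem_powerset] at hT
          exact Finset.union_sdiff_of_subset hT.2)
        (fun T' hT' => by
          simp only [Finset.mem_powerset] at hT'
          exact Finset.union_sdiff_cancel_left
            (Finset.disjoint_of_subset_right hT' Finset.sdiff_disjoint.symm))
        (fun T hT => by
          simp only [Finset.mem_filter, Finset.mem_powerset] at hT
          rw [Finset.card_sdiff_of_subset hT.2])
    rw [reidx]
    have : ∑ T' ∈ (W \ R).powerset, (-1 : ℝ) ^ T'.card
        = if W \ R = ∅ then 1 else 0 := by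
      have := Finset.sum_powerset_neg_one_pow_card (x := W \ R)
      exact_mod_cast congrArg (Int.cast : ℤ → ℝ) this
    rw [this]
    congr 1
    simp only [Finset.sdiff_eq_empty_iff_subset, eq_iff_iff]
    exact ⟨fun h => Finset.Subset.antisymm hR h, fun h => le_of_eq h.symm⟩
  rw [Finset.sum_congr rfl inner]
  simp only [ite_mul, one_mul, zero_mul, Finset.sum_ite_eq', Finset.mem_powerset]
  simp

/-- `Φ_{B,p}(f,S) = Σ_{T⊆N∖S} p_T^S (f(T∪S) − f(T))`, where the
coefficients `p_T^S` are nonnegative and sum to `1`. -/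
theorem wBanzhafInfluence_is_generalized_value (n : ℕ) (p : Fin n → ℝ)
    (hp : ∀ i, p i ∈ Set.Ioo (0 : ℝ) 1) (f : Finset (Fin n) → ℝ) (S : Finset (Fin n)) :
    (wBanzhafInfluence p f S
        = ∑ T ∈ (univ \ S).powerset, pTS p S T * (f (T ∪ S) - f T))
    ∧ (∀ T ∈ (univ \ S).powerset, 0 ≤ pTS p S T)
    ∧ (∑ T ∈ (univ \ S).powerset, pTS p S T = 1) := by
  classical
  set A : Finset (Fin n) := univ \ S with hA
  -- key marginal lemma
  have key : ∀ B : Finset (Fin n), B ⊆ A →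
      ∑ T ∈ A.powerset.filter (fun T => B ⊆ T), pTS p S T = ∏ i ∈ B, p i := by
    intro B hB
    have step : ∑ T ∈ A.powerset.filter (fun T => B ⊆ T), pTS p S T
        = ∑ T' ∈ (A \ B).powerset,
            (∏ i ∈ B, p i) * ((∏ i ∈ T', p i) * ∏ i ∈ (A \ B) \ T', (1 - p i)) := by
      refine Finset.sum_nbij' (i := fun T => T \ B) (j := fun T' => B ∪ T')
        (fun T hT => by
          simp only [Finset.mem_filter, Finset.mem_powerset] at hT ⊢
          exact Finset.sdiff_subset_sdiff hT.1 le_rfl)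
        (fun T' hT' => by
          simp only [Finset.mem_filter, Finset.mem_powerset] at hT' ⊢
          exact ⟨Finset.union_subset hB (hT'.trans Finset.sdiff_subset),
            Finset.subset_union_left⟩)
        (fun T hT => by
          simp only [Finset.mem_filter, Finset.mem_powerset] at hT
          exact Finset.union_sdiff_of_subset hT.2)
        (fun T' hT' => by
          simp only [Finset.mem_powerset] at hT'
          exact Finset.union_sdiff_cancel_left
            (Finset.disjoint_of_subset_right hT' Finset.sdiff_disjoint.symm))
        (fun T hT => ?_)
      simp only [Finset.mem_filter, Finset.mem_powerset] at hT
      unfold pTS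
      have h1 : (∏ i ∈ T, p i) = (∏ i ∈ B, p i) * ∏ i ∈ T \ B, p i := by
        rw [mul_comm, Finset.prod_sdiff hT.2]
      have h2 : (univ : Finset (Fin n)) \ (S ∪ T) = (A \ B) \ (T \ B) := by
        ext i
        have h1 : i ∈ B → i ∈ T := fun h => hT.2 h
        simp only [Finset.mem_sdiff, Finset.mem_union, Finset.mem_univ, true_and, hA, not_or]
        tauto
      rw [h1, h2, mul_assoc]
    rw [step, ← Finset.mul_sum, sum_bern, mul_one]
  refine ⟨?_, ?_, ?_⟩
  · -- main identity
    have hswap : ∀ U : Finset (Fin n), ∀ T : Finset (Fin n),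
        (U ∈ (univ : Finset (Finset (Fin n))).filter (fun U => (U ∩ S).Nonempty)
          ∧ T ∈ A.powerset.filter (fun T => U \ S ⊆ T))
        ↔ (U ∈ (T ∪ S).powerset.filter (fun U => (U ∩ S).Nonempty) ∧ T ∈ A.powerset) := by
      intro U T
      simp only [Finset.mem_filter, Finset.mem_powerset, Finset.mem_univ, true_and]
      constructor
      · rintro ⟨hU, hTA, hUT⟩
        refine ⟨⟨?_, hU⟩, hTA⟩
        rw [Finset.union_comm]
        exact sdiff_le_iff.mp hUT
      · rintro ⟨⟨hUT, hU⟩, hTA⟩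
        exact ⟨hU, hTA, sdiff_le_iff.mpr (hUT.trans (le_of_eq (Finset.union_comm T S)))⟩
    calc wBanzhafInfluence p f S
        = ∑ U ∈ (univ : Finset (Finset (Fin n))).filter (fun U => (U ∩ S).Nonempty),
            ∑ T ∈ A.powerset.filter (fun T => U \ S ⊆ T), moebius f U * pTS p S T := by
          unfold wBanzhafInfluence
          refine Finset.sum_congr rfl fun U hU => ?_
          rw [← Finset.mul_sum, key (U \ S) (by
            intro i hi
            simp only [Finset.mem_sdiff] at hi
            simp [hA, hi.2])]
      _ = ∑ T ∈ A.powerset,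
            ∑ U ∈ (T ∪ S).powerset.filter (fun U => (U ∩ S).Nonempty),
              moebius f U * pTS p S T := Finset.sum_comm' hswap
      _ = ∑ T ∈ A.powerset, pTS p S T * (f (T ∪ S) - f T) := by
          refine Finset.sum_congr rfl fun T hT => ?_
          simp only [Finset.mem_powerset] at hT
          have hTS : T ∩ S = ∅ := by
            rw [Finset.eq_empty_iff_forall_notMem]
            intro i hi
            simp only [Finset.mem_inter] at hi
            have := hT hi.1
            simp [hA] at this
            exact this hi.2
          rw [← Finset.sum_mul, mul_comm]
          congr 1
          have hsplit := Finset.sum_filter_add_sum_filter_not (T ∪ S).powerset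
            (fun U => (U ∩ S).Nonempty) (moebius f)
          have hneg : (T ∪ S).powerset.filter (fun U => ¬ (U ∩ S).Nonempty)
              = T.powerset := by
            ext U
            simp only [Finset.mem_filter, Finset.mem_powerset, Finset.not_nonempty_iff_eq_empty,
              ← Finset.disjoint_iff_inter_eq_empty]
            constructor
            · rintro ⟨hUTS, hd⟩
              intro i hi
              rcases Finset.mem_union.mp (hUTS hi) with h | h
              · exact h
              · exact absurd h (Finset.disjoint_left.mp hd hi)
            · intro hUT
              refine ⟨hUT.trans Finset.subset_union_left, ?_⟩
              refine Finset.disjoint_left.mpr fun i hi hiS => ?_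
              have : i ∈ T ∩ S := Finset.mem_inter.mpr ⟨hUT hi, hiS⟩
              simp [hTS] at this
          rw [hneg, moebius_inv, moebius_inv] at hsplit
          linarith
  · intro T _
    exact mul_nonneg (Finset.prod_nonneg fun i _ => (hp i).1.le)
      (Finset.prod_nonneg fun i _ => by linarith [(hp i).2])
  · have congr1 : ∀ T ∈ A.powerset, pTS p S T
        = (∏ i ∈ T, p i) * ∏ i ∈ A \ T, (1 - p i) := by
      intro T _
      unfold pTS
      have h2 : (univ : Finset (Fin n)) \ (S ∪ T) = A \ T := by
        ext i
        simp only [Finset.mem_sdiff, Finset.mem_union, Finset.mem_univ, true_and, hA, not_or]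
      rw [h2]
    rw [Finset.sum_congr rfl congr1, sum_bern]
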